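/- Let λ1 ≥ λ2 ≥ λ3 > 0 with σ1 = λ1+λ2+λ3, f = λ1λ2λ3/σ1, λ2 ≤ λ1/4, and F^{11} = f(1/λ1 − 1/σ1), F^{22} = f(1/λ2 − 1/σ1). Then f³/(2λ2σ1⁴(F^{22})²) ≥ (1/108)·F^{11}/λ1². -/

import Mathlib

theorem caseA_final_estimate (l1 l2 l3 σ1 f F11 F22 : ℝ)
    (h12 : l1 ≥ l2) (h23 : l2 ≥ l3) (h3 : l3 > 0)
    (hσ1 : σ1 = l1 + l2 + l3) (hf : f = l1 * l2 * l3 / σ1)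
    (hcase : l2 ≤ l1 / 4)
    (hF11 : F11 = f * (1 / l1 - 1 / σ1)) (hF22 : F22 = f * (1 / l2 - 1 / σ1)) :
    f ^ 3 / (2 * l2 * σ1 ^ 4 * F22 ^ 2) ≥ (1 / 108) * (F11 / l1 ^ 2) := by
  have h2 : l2 > 0 := lt_of_lt_of_le h3 h23
  have h1 : l1 > 0 := lt_of_lt_of_le h2 h12
  have hs : σ1 > 0 := by rw [hσ1]; linarith
  have hfpos : f > 0 := by rw [hf]; positivity
  have e1 : 1 / l1 - 1 / σ1 = (l2 + l3) / (l1 * σ1) := by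
    rw [hσ1]; field_simp; ring
  have e2 : 1 / l2 - 1 / σ1 = (l1 + l3) / (l2 * σ1) := by
    rw [hσ1]; field_simp; ring
  have hF11' : F11 = f * (l2 + l3) / (l1 * σ1) := by rw [hF11, e1]; ring
  have hF22' : F22 = f * (l1 + l3) / (l2 * σ1) := by rw [hF22, e2]; ring
  have hL : f ^ 3 / (2 * l2 * σ1 ^ 4 * F22 ^ 2)
      = f * l2 / (2 * σ1 ^ 2 * (l1 + l3) ^ 2) := by
    rw [hF22']; field_simp
  have hR : (1:ℝ)/108 * (f * (l2 + l3) / (l1 * σ1) / l1 ^ 2)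
      = f * (l2 + l3) / (108 * l1 ^ 3 * σ1) := by
    field_simp
  rw [hL, hF11', ge_iff_le, hR]
  rw [div_le_div_iff₀ (by positivity) (by positivity)]
  have key : σ1 * (l1 + l3) ^ 2 * (l2 + l3) ≤ 3 / 2 * l1 * (5 / 4 * l1) ^ 2 * (2 * l2) := by
    have hb : σ1 ≤ 3 / 2 * l1 := by rw [hσ1]; linarith
    gcongr <;> linarith
  have key2 : 3 / 2 * l1 * (5 / 4 * l1) ^ 2 * (2 * l2) ≤ 54 * l1 ^ 3 * l2 := by
    nlinarith [mul_nonneg (mul_nonneg (mul_nonneg h1.le h1.le) h1.le) h2.le]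
  nlinarith [mul_le_mul_of_nonneg_left (key.trans key2) (by positivity : (0:ℝ) ≤ 2 * f * σ1)]
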